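/- arXiv:2502.13583 — 2 statements merged into one kernel-verified Lean document; each statement's English description precedes it below -/
import Mathlib

section
/- Let A ∈ ℝ^{n×d}, C ∈ ℝ^{d×d} positive semidefinite with H = AᵀA + C positive definite, and set A_C = A H^{-1/2}. If (1+ε)⁻¹ A_Cᵀ A_C ⪯ M ⪯ (1+ε) A_Cᵀ A_C for a symmetric matrix M and ε > 0, then (1+ε)⁻¹ H ⪯ H^{1/2} M H^{1/2} + C ⪯ (1+ε) H, and consequently (1+ε)⁻¹ H⁻¹ ⪯ (H^{1/2} M H^{1/2} + C)⁻¹ ⪯ (1+ε) H⁻¹. -/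
open Matrix

section

open scoped ComplexOrder

/-- The square root of a positive semidefinite matrix, with the definition it had in Mathlib
(December 2024), where it has since been removed. -/
noncomputable def Matrix.PosSemidef.sqrt {n 𝕜 : Type*} [Fintype n] [RCLike 𝕜] [DecidableEq n]
    {A : Matrix n n 𝕜} (hA : A.PosSemidef) : Matrix n n 𝕜 :=
  hA.1.eigenvectorUnitary.1 * diagonal ((↑) ∘ (√·) ∘ hA.1.eigenvalues) *
  (star hA.1.eigenvectorUnitary : Matrix n n 𝕜)

end

lemma Matrix.PosSemidef.posSemidef_sqrt {d : ℕ} {A : Matrix (Fin d) (Fin d) ℝ}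
    (hA : A.PosSemidef) : hA.sqrt.PosSemidef := by
  unfold Matrix.PosSemidef.sqrt
  have hD : (diagonal (((↑) ∘ (√·) ∘ hA.1.eigenvalues) : Fin d → ℝ)).PosSemidef := by
    rw [posSemidef_diagonal_iff]
    intro i
    simp [Real.sqrt_nonneg]
  have := hD.mul_mul_conjTranspose_same (hA.1.eigenvectorUnitary : Matrix (Fin d) (Fin d) ℝ)
  rw [Matrix.star_eq_conjTranspose]
  exact this

lemma Matrix.PosSemidef.sqrt_mul_self {d : ℕ} {A : Matrix (Fin d) (Fin d) ℝ}
    (hA : A.PosSemidef) : hA.sqrt * hA.sqrt = A := by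
  unfold Matrix.PosSemidef.sqrt
  set U := hA.1.eigenvectorUnitary with hU
  have hUU : (star U : Matrix (Fin d) (Fin d) ℝ) * (U : Matrix (Fin d) (Fin d) ℝ) = 1 :=
    Unitary.coe_star_mul_self U
  have hDD : diagonal ((RCLike.ofReal ∘ (fun x : ℝ => √x) ∘ hA.1.eigenvalues) : Fin d → ℝ) *
      diagonal ((RCLike.ofReal ∘ (fun x : ℝ => √x) ∘ hA.1.eigenvalues) : Fin d → ℝ)
      = diagonal (RCLike.ofReal ∘ hA.1.eigenvalues) := by
    rw [diagonal_mul_diagonal]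
    congr 1
    funext i
    simp [Real.mul_self_sqrt (hA.eigenvalues_nonneg i)]
  conv_rhs => rw [hA.1.spectral_theorem]
  rw [Unitary.conjStarAlgAut_apply, ← hDD]
  simp only [Matrix.mul_assoc]
  rw [← Matrix.mul_assoc (star (U : Matrix (Fin d) (Fin d) ℝ)), hUU, Matrix.one_mul]

private lemma smul_psd {d : ℕ} {A : Matrix (Fin d) (Fin d) ℝ} (hA : A.PosSemidef)
    {c : ℝ} (hc : 0 ≤ c) : (c • A).PosSemidef := by
  refine ⟨?_, fun x => ?_⟩
  · rw [IsHermitian, conjTranspose_smul, hA.1]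
    simp
  · exact (hA.smul hc).2 x

private lemma smul_pd {d : ℕ} {A : Matrix (Fin d) (Fin d) ℝ} (hA : A.PosDef)
    {c : ℝ} (hc : 0 < c) : (c • A).PosDef := by
  refine ⟨?_, fun x hx => ?_⟩
  · rw [IsHermitian, conjTranspose_smul, hA.1]
    simp
  · exact (hA.smul hc).2 hx

private lemma sqrt_isUnit {d : ℕ} {A : Matrix (Fin d) (Fin d) ℝ} (hA : A.PosDef) :
    IsUnit hA.posSemidef.sqrt := by
  rw [Matrix.isUnit_iff_isUnit_det]
  have h : hA.posSemidef.sqrt.det * hA.posSemidef.sqrt.det = A.det := by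
    rw [← det_mul, hA.posSemidef.sqrt_mul_self]
  have hd : A.det ≠ 0 := hA.det_pos.ne'
  exact isUnit_iff_ne_zero.mpr (fun h0 => hd (by rw [← h, h0, mul_zero]))

private lemma conj_pd {d : ℕ} {X T : Matrix (Fin d) (Fin d) ℝ} (hX : X.PosDef)
    (hTh : Tᴴ = T) (hT : IsUnit T) : (T * X * T).PosDef := by
  have hrw : T * X * T = Tᴴ * X * T := by rw [hTh]
  rw [hrw]
  have hinj : Function.Injective T.mulVec := Matrix.mulVec_injective_iff_isUnit.mpr hT
  exact hX.conjTranspose_mul_mul_same hinj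

private lemma smul_matrix_inv {d : ℕ} {A : Matrix (Fin d) (Fin d) ℝ} (hA : IsUnit A.det)
    {c : ℝ} (hc : c ≠ 0) : (c • A)⁻¹ = c⁻¹ • A⁻¹ := by
  apply Matrix.inv_eq_right_inv
  rw [smul_mul_smul_comm, mul_inv_cancel₀ hc, Matrix.mul_nonsing_inv A hA, one_smul]

/-- If `X ⪯ Y` with both positive definite, then `Y⁻¹ ⪯ X⁻¹`. -/
private lemma inv_antitone {d : ℕ} {X Y : Matrix (Fin d) (Fin d) ℝ}
    (hX : X.PosDef) (hY : Y.PosDef) (h : (Y - X).PosSemidef) :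
    (X⁻¹ - Y⁻¹).PosSemidef := by
  classical
  set T := hY.inv.posSemidef.sqrt with hT
  have hTT : T * T = Y⁻¹ := hY.inv.posSemidef.sqrt_mul_self
  have hTherm : Tᴴ = T := hY.inv.posSemidef.posSemidef_sqrt.1
  have hTunit : IsUnit T := sqrt_isUnit hY.inv
  have hYdet : IsUnit Y.det := (Matrix.isUnit_iff_isUnit_det Y).mp hY.isUnit
  have hYinv : Y * Y⁻¹ = 1 := Matrix.mul_nonsing_inv Y hYdet
  have hYinv' : Y⁻¹ * Y = 1 := Matrix.nonsing_inv_mul Y hYdet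
  -- T commutes with Y
  have h1 : T * Y⁻¹ = Y⁻¹ * T := by rw [← hTT, mul_assoc]
  have hcomm : T * Y = Y * T := by
    calc T * Y = (Y * Y⁻¹) * (T * Y) := by rw [hYinv, one_mul]
    _ = Y * (Y⁻¹ * T) * Y := by simp only [mul_assoc]
    _ = Y * (T * Y⁻¹) * Y := by rw [h1]
    _ = (Y * T) * (Y⁻¹ * Y) := by simp only [mul_assoc]
    _ = Y * T := by rw [hYinv', mul_one]
  have hTYT : T * Y * T = 1 := by rw [hcomm, mul_assoc, hTT, hYinv]
  -- conjugate the hypothesis by T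
  have step1 : (1 - T * X * T).PosSemidef := by
    have hps := h.mul_mul_conjTranspose_same T
    rw [hTherm] at hps
    have e : T * (Y - X) * T = 1 - T * X * T := by
      rw [Matrix.mul_sub, Matrix.sub_mul, hTYT]
    rwa [e] at hps
  -- Z = T X T is posdef
  have hZ : (T * X * T).PosDef := conj_pd hX hTherm hTunit
  set Z := T * X * T with hZdef
  have hZunit : IsUnit Z.det := (Matrix.isUnit_iff_isUnit_det Z).mp hZ.isUnit
  have hZZinv : Z * Z⁻¹ = 1 := Matrix.mul_nonsing_inv Z hZunit
  have hZinvZ : Z⁻¹ * Z = 1 := Matrix.nonsing_inv_mul Z hZunit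
  set U := hZ.inv.posSemidef.sqrt with hU
  have hUU : U * U = Z⁻¹ := hZ.inv.posSemidef.sqrt_mul_self
  have hUherm : Uᴴ = U := hZ.inv.posSemidef.posSemidef_sqrt.1
  have h2 : U * Z⁻¹ = Z⁻¹ * U := by rw [← hUU, mul_assoc]
  have hUcomm : U * Z = Z * U := by
    calc U * Z = (Z * Z⁻¹) * (U * Z) := by rw [hZZinv, one_mul]
    _ = Z * (Z⁻¹ * U) * Z := by simp only [mul_assoc]
    _ = Z * (U * Z⁻¹) * Z := by rw [h2]
    _ = (Z * U) * (Z⁻¹ * Z) := by simp only [mul_assoc]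
    _ = Z * U := by rw [hZinvZ, mul_one]
  have hUZU : U * Z * U = 1 := by rw [hUcomm, mul_assoc, hUU, hZZinv]
  -- conjugate step1 by U
  have step2 : (Z⁻¹ - 1).PosSemidef := by
    have hps := step1.mul_mul_conjTranspose_same U
    rw [hUherm] at hps
    have e : U * (1 - Z) * U = Z⁻¹ - 1 := by
      rw [Matrix.mul_sub, Matrix.mul_one, Matrix.sub_mul, hUU, hUZU]
    rwa [e] at hps
  -- conjugate step2 by T
  have hTdet : IsUnit T.det := (Matrix.isUnit_iff_isUnit_det T).mp hTunit
  have hTTinv : T * T⁻¹ = 1 := Matrix.mul_nonsing_inv T hTdet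
  have hTinvT : T⁻¹ * T = 1 := Matrix.nonsing_inv_mul T hTdet
  have hps := step2.mul_mul_conjTranspose_same T
  rw [hTherm] at hps
  have eZ : T * Z⁻¹ * T = X⁻¹ := by
    rw [hZdef, Matrix.mul_inv_rev, Matrix.mul_inv_rev]
    simp only [mul_assoc]
    rw [hTinvT, mul_one, ← mul_assoc, hTTinv, one_mul]
  have e : T * (Z⁻¹ - 1) * T = X⁻¹ - Y⁻¹ := by
    rw [Matrix.mul_sub, Matrix.mul_one, Matrix.sub_mul, eZ, hTT]
  rwa [e] at hps

/-- Lemma B.1: if a symmetric matrix `M` is an ε-approximation of the whitened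
Gram matrix `A_Cᵀ A_C` (with `A_C = A H^{-1/2}`, `H = AᵀA + C`), then
`H^{1/2} M H^{1/2} + C` is an ε-approximation of `H`, and consequently its
inverse is an ε-approximation of `H⁻¹`, in the Loewner order. -/
theorem subspace_embedding_inversion {n d : ℕ}
    (A : Matrix (Fin n) (Fin d) ℝ) (C : Matrix (Fin d) (Fin d) ℝ)
    (hC : C.PosSemidef)
    (H : Matrix (Fin d) (Fin d) ℝ) (hHdef : H = Aᵀ * A + C) (hH : H.PosDef)
    (Hhalf : Matrix (Fin d) (Fin d) ℝ) (hHhalf : Hhalf = hH.posSemidef.sqrt)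
    (AC : Matrix (Fin n) (Fin d) ℝ) (hAC : AC = A * Hhalf⁻¹)
    (M : Matrix (Fin d) (Fin d) ℝ) (hM : M.IsSymm) (ε : ℝ) (hε : 0 < ε)
    (h1 : (M - (1 + ε)⁻¹ • (ACᵀ * AC)).PosSemidef)
    (h2 : ((1 + ε) • (ACᵀ * AC) - M).PosSemidef) :
    ((Hhalf * M * Hhalf + C - (1 + ε)⁻¹ • H).PosSemidef ∧
      ((1 + ε) • H - (Hhalf * M * Hhalf + C)).PosSemidef) ∧
    (((Hhalf * M * Hhalf + C)⁻¹ - (1 + ε)⁻¹ • H⁻¹).PosSemidef ∧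
      ((1 + ε) • H⁻¹ - (Hhalf * M * Hhalf + C)⁻¹).PosSemidef) := by
  have hεp : (0:ℝ) < 1 + ε := by linarith
  have hεn : (1 + ε) ≠ 0 := hεp.ne'
  have hinvpos : (0:ℝ) < (1 + ε)⁻¹ := by positivity
  have hHherm : Hhalfᴴ = Hhalf := by rw [hHhalf]; exact hH.posSemidef.posSemidef_sqrt.1
  have hHsq : Hhalf * Hhalf = H := by rw [hHhalf]; exact hH.posSemidef.sqrt_mul_self
  have hHunit : IsUnit Hhalf := by rw [hHhalf]; exact sqrt_isUnit hH
  have hHdet : IsUnit Hhalf.det := (Matrix.isUnit_iff_isUnit_det Hhalf).mp hHunit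
  have hHi : Hhalf * Hhalf⁻¹ = 1 := Matrix.mul_nonsing_inv Hhalf hHdet
  have hHi' : Hhalf⁻¹ * Hhalf = 1 := Matrix.nonsing_inv_mul Hhalf hHdet
  have hHit : (Hhalf⁻¹)ᵀ = Hhalf⁻¹ := by
    rw [Matrix.transpose_nonsing_inv]
    congr 1
  -- key : Hhalf * (ACᵀ * AC) * Hhalf = Aᵀ * A
  have hkey : Hhalf * (ACᵀ * AC) * Hhalf = Aᵀ * A := by
    rw [hAC, Matrix.transpose_mul, hHit]
    calc Hhalf * (Hhalf⁻¹ * Aᵀ * (A * Hhalf⁻¹)) * Hhalf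
        = (Hhalf * Hhalf⁻¹) * (Aᵀ * A) * (Hhalf⁻¹ * Hhalf) := by simp only [Matrix.mul_assoc]
    _ = Aᵀ * A := by rw [hHi, hHi', one_mul, mul_one]
  have expand1 : Hhalf * (M - (1 + ε)⁻¹ • (ACᵀ * AC)) * Hhalf
      = Hhalf * M * Hhalf - (1 + ε)⁻¹ • (Aᵀ * A) := by
    rw [Matrix.mul_sub, Matrix.sub_mul, Matrix.mul_smul, Matrix.smul_mul, hkey]
  have expand2 : Hhalf * ((1 + ε) • (ACᵀ * AC) - M) * Hhalf
      = (1 + ε) • (Aᵀ * A) - Hhalf * M * Hhalf := by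
    rw [Matrix.mul_sub, Matrix.sub_mul, Matrix.mul_smul, Matrix.smul_mul, hkey]
  -- first part
  have part1a : (Hhalf * M * Hhalf + C - (1 + ε)⁻¹ • H).PosSemidef := by
    have e1 : Hhalf * M * Hhalf + C - (1 + ε)⁻¹ • H
        = (Hhalf * M * Hhalf - (1 + ε)⁻¹ • (Aᵀ * A)) + (1 - (1 + ε)⁻¹) • C := by
      rw [hHdef]
      ext i j
      simp only [Matrix.add_apply, Matrix.sub_apply, Matrix.smul_apply, smul_eq_mul]
      try ring
    rw [e1, ← expand1]
    have hconj := h1.mul_mul_conjTranspose_same Hhalf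
    rw [hHherm] at hconj
    have hc1 : (0:ℝ) ≤ 1 - (1 + ε)⁻¹ := by
      have : (1 + ε)⁻¹ ≤ 1 := by
        rw [inv_le_one_iff₀]; right; linarith
      linarith
    exact hconj.add (smul_psd hC hc1)
  have part1b : ((1 + ε) • H - (Hhalf * M * Hhalf + C)).PosSemidef := by
    have e2 : (1 + ε) • H - (Hhalf * M * Hhalf + C)
        = ((1 + ε) • (Aᵀ * A) - Hhalf * M * Hhalf) + ε • C := by
      rw [hHdef]
      ext i j
      simp only [Matrix.add_apply, Matrix.sub_apply, Matrix.smul_apply, smul_eq_mul]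
      try ring
    rw [e2, ← expand2]
    have hconj := h2.mul_mul_conjTranspose_same Hhalf
    rw [hHherm] at hconj
    exact hconj.add (smul_psd hC hε.le)
  refine ⟨⟨part1a, part1b⟩, ?_, ?_⟩
  -- K is positive definite
  all_goals
    have hK : (Hhalf * M * Hhalf + C).PosDef := by
      have e : Hhalf * M * Hhalf + C
          = (1 + ε)⁻¹ • H + (Hhalf * M * Hhalf + C - (1 + ε)⁻¹ • H) := by
        ext i j
        simp only [Matrix.add_apply, Matrix.sub_apply, Matrix.smul_apply, smul_eq_mul]
        try ring
      rw [e]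
      exact (smul_pd hH hinvpos).add_posSemidef part1a
  · -- K⁻¹ - (1+ε)⁻¹ • H⁻¹ PSD : use K ⪯ (1+ε) H
    have := inv_antitone hK (smul_pd hH hεp) part1b
    rwa [smul_matrix_inv ((Matrix.isUnit_iff_isUnit_det H).mp hH.isUnit) hεn] at this
  · -- (1+ε) • H⁻¹ - K⁻¹ PSD : use (1+ε)⁻¹ H ⪯ K
    have := inv_antitone (smul_pd hH hinvpos) hK part1a
    rwa [smul_matrix_inv ((Matrix.isUnit_iff_isUnit_det H).mp hH.isUnit)
      (inv_ne_zero hεn), inv_inv] at this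
end

section
/- Let A ∈ ℝ^{n×d}, C p.s.d. with H = AᵀA + C positive definite, πᵢ > 0 with ∑πᵢ = 1, ℓᵢ = aᵢᵀH⁻¹aᵢ, d_eff = ∑ℓᵢ, ρ_max = maxᵢ ℓᵢ/(πᵢ d_eff), ρ_min = minᵢ ℓᵢ/(πᵢ d_eff), and m > 0. Suppose D = diag(D₁₁,…,D_nn) satisfies the fixed-point equations Dᵢᵢ = m/(m + aᵢᵀ(AᵀDA + C)⁻¹aᵢ/πᵢ) with all Dᵢᵢ ∈ (1/2, 1]. Then m/(m + 2ρ_max d_eff) ≤ Dᵢᵢ ≤ m/(m + ρ_min d_eff) for every i. -/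
open Matrix

lemma quad_inv_lb {d : ℕ} {B : Matrix (Fin d) (Fin d) ℝ} (hB : B.PosDef)
    (x y : Fin d → ℝ) :
    2 * (y ⬝ᵥ x) - y ⬝ᵥ (B *ᵥ y) ≤ x ⬝ᵥ (B⁻¹ *ᵥ x) := by
  have hdet : IsUnit B.det := hB.det_pos.ne'.isUnit
  set w : Fin d → ℝ := B⁻¹ *ᵥ x with hw
  have hBw : B *ᵥ w = x := by
    rw [hw, mulVec_mulVec, Matrix.mul_nonsing_inv _ hdet, one_mulVec]
  have hBsymm : Bᵀ = B := by
    have := hB.isHermitian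
    simpa [Matrix.IsHermitian] using this
  have hwBy : w ⬝ᵥ (B *ᵥ y) = x ⬝ᵥ y := by
    rw [dotProduct_mulVec, ← mulVec_transpose, hBsymm, hBw]
  have h0 : 0 ≤ (y - w) ⬝ᵥ (B *ᵥ (y - w)) := by
    simpa using hB.posSemidef.dotProduct_mulVec_nonneg (y - w)
  have hexp : (y - w) ⬝ᵥ (B *ᵥ (y - w))
      = y ⬝ᵥ (B *ᵥ y) - y ⬝ᵥ x - x ⬝ᵥ y + w ⬝ᵥ x := by
    rw [mulVec_sub, dotProduct_sub, sub_dotProduct, sub_dotProduct, hBw, hwBy]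
    ring
  have hcomm : y ⬝ᵥ x = x ⬝ᵥ y := dotProduct_comm _ _
  have hwx : w ⬝ᵥ x = x ⬝ᵥ (B⁻¹ *ᵥ x) := dotProduct_comm _ _
  rw [hexp, hwx] at h0
  linarith

lemma quad_inv_anti {d : ℕ} {B H : Matrix (Fin d) (Fin d) ℝ}
    (hB : B.PosDef) (hH : H.PosDef) (hle : (H - B).PosSemidef) (x : Fin d → ℝ) :
    x ⬝ᵥ (H⁻¹ *ᵥ x) ≤ x ⬝ᵥ (B⁻¹ *ᵥ x) := by
  have hdet : IsUnit H.det := hH.det_pos.ne'.isUnit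
  set y : Fin d → ℝ := H⁻¹ *ᵥ x with hy
  have hHy : H *ᵥ y = x := by
    rw [hy, mulVec_mulVec, Matrix.mul_nonsing_inv _ hdet, one_mulVec]
  have h1 := quad_inv_lb hB x y
  have h2 : 0 ≤ y ⬝ᵥ ((H - B) *ᵥ y) := by simpa using hle.dotProduct_mulVec_nonneg y
  have h3 : y ⬝ᵥ ((H - B) *ᵥ y) = y ⬝ᵥ x - y ⬝ᵥ (B *ᵥ y) := by
    rw [sub_mulVec, dotProduct_sub, hHy]
  have h4 : y ⬝ᵥ x = x ⬝ᵥ (H⁻¹ *ᵥ x) := dotProduct_comm _ _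
  linarith

lemma sandwich_psd {n d : ℕ} (A : Matrix (Fin n) (Fin d) ℝ)
    (f : Fin n → ℝ) (hf : ∀ j, 0 ≤ f j) :
    (Aᵀ * Matrix.diagonal f * A).PosSemidef := by
  have := (Matrix.PosSemidef.diagonal hf).conjTranspose_mul_mul_same A
  simpa using this


/-- Lemma D.2: bounds on the self-consistent diagonal matrix `D` of Theorem 1.
If `D` solves the fixed-point equations
`Dᵢᵢ = m/(m + aᵢᵀ(AᵀDA + C)⁻¹aᵢ/πᵢ)` with all `Dᵢᵢ ∈ (1/2, 1]`, then
`m/(m + 2ρmax·d_eff) ≤ Dᵢᵢ ≤ m/(m + ρmin·d_eff)` for every `i`. -/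
theorem self_consistent_D_bounds {n d : ℕ}
    (A : Matrix (Fin n) (Fin d) ℝ) (C : Matrix (Fin d) (Fin d) ℝ)
    (hC : C.PosSemidef) (hH : (Aᵀ * A + C).PosDef)
    (π : Fin n → ℝ) (hπ : ∀ i, 0 < π i) (hsum : ∑ i, π i = 1)
    (ℓ : Fin n → ℝ) (hℓ : ∀ i, ℓ i = A i ⬝ᵥ ((Aᵀ * A + C)⁻¹ *ᵥ A i))
    (deff : ℝ) (hdeff : deff = ∑ i, ℓ i)
    (ρmax ρmin : ℝ)
    (hρmax : ∀ i, ℓ i / (π i * deff) ≤ ρmax)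
    (hρmin0 : 0 ≤ ρmin) (hρmin : ∀ i, ρmin ≤ ℓ i / (π i * deff))
    (m : ℝ) (hm : 0 < m)
    (D : Fin n → ℝ) (hDlb : ∀ i, 1 / 2 < D i) (hDub : ∀ i, D i ≤ 1)
    (hfix : ∀ i, D i =
      m / (m + (A i ⬝ᵥ ((Aᵀ * Matrix.diagonal D * A + C)⁻¹ *ᵥ A i)) / π i)) :
    ∀ i, m / (m + 2 * ρmax * deff) ≤ D i ∧ D i ≤ m / (m + ρmin * deff) := by
  set H : Matrix (Fin d) (Fin d) ℝ := Aᵀ * A + C with hHdef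
  set B : Matrix (Fin d) (Fin d) ℝ := Aᵀ * Matrix.diagonal D * A + C with hBdef
  -- H - B is psd
  have hid1 : H - B = Aᵀ * Matrix.diagonal (fun j => 1 - D j) * A := by
    have hdiag : Matrix.diagonal (fun j => (1:ℝ) - D j)
        = 1 - Matrix.diagonal D := by
      rw [← Matrix.diagonal_one, ← Matrix.diagonal_sub]
    rw [hHdef, hBdef, hdiag, Matrix.mul_sub, Matrix.sub_mul, Matrix.mul_one]
    abel
  have hHBpsd : (H - B).PosSemidef := by
    rw [hid1]
    exact sandwich_psd A _ (fun j => by linarith [hDub j])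
  -- 2•B - H is psd
  have hid2 : (2:ℝ) • B - H = Aᵀ * Matrix.diagonal (fun j => 2 * D j - 1) * A + C := by
    have hdiag : Matrix.diagonal (fun j => 2 * D j - (1:ℝ))
        = (2:ℝ) • Matrix.diagonal D - 1 := by
      rw [← Matrix.diagonal_one, ← Matrix.diagonal_smul, ← Matrix.diagonal_sub]
      rfl
    rw [hBdef, hHdef, hdiag, Matrix.mul_sub, Matrix.sub_mul, Matrix.mul_one,
      Matrix.mul_smul, Matrix.smul_mul, smul_add]
    module
  have h2Bpsd : ((2:ℝ) • B - H).PosSemidef := by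
    rw [hid2]
    exact (sandwich_psd A _ (fun j => by linarith [hDlb j])).add hC
  -- B is positive definite
  have hBpsd : B.PosSemidef :=
    (sandwich_psd A D (fun j => by linarith [hDlb j])).add hC
  have hBpos : B.PosDef := by
    refine Matrix.PosDef.of_dotProduct_mulVec_pos hBpsd.1 (fun x hx => ?_)
    have h1 : 0 ≤ x ⬝ᵥ (((2:ℝ) • B - H) *ᵥ x) := by simpa using h2Bpsd.dotProduct_mulVec_nonneg x
    have h2 : 0 < x ⬝ᵥ (H *ᵥ x) := by simpa using hH.dotProduct_mulVec_pos hx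
    have h3 : x ⬝ᵥ (((2:ℝ) • B - H) *ᵥ x)
        = 2 * (x ⬝ᵥ (B *ᵥ x)) - x ⬝ᵥ (H *ᵥ x) := by
      rw [sub_mulVec, dotProduct_sub, smul_mulVec, dotProduct_smul,
        smul_eq_mul]
    simp only [star_trivial]
    linarith [h3 ▸ h1]
  -- half of H
  have hGpos : ((2:ℝ)⁻¹ • H).PosDef := by
    refine Matrix.PosDef.of_dotProduct_mulVec_pos ?_ (fun x hx => ?_)
    · show ((2:ℝ)⁻¹ • H)ᴴ = (2:ℝ)⁻¹ • H
      rw [Matrix.conjTranspose_smul, hH.1.eq, star_trivial]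
    · have h2 : 0 < x ⬝ᵥ (H *ᵥ x) := by simpa using hH.dotProduct_mulVec_pos hx
      have : x ⬝ᵥ (((2:ℝ)⁻¹ • H) *ᵥ x) = (2:ℝ)⁻¹ * (x ⬝ᵥ (H *ᵥ x)) := by
        rw [smul_mulVec, dotProduct_smul, smul_eq_mul]
      simp only [star_trivial]
      rw [this]
      positivity
  have hBGpsd : (B - (2:ℝ)⁻¹ • H).PosSemidef := by
    have : B - (2:ℝ)⁻¹ • H = (2:ℝ)⁻¹ • ((2:ℝ) • B - H) := by
      rw [smul_sub, smul_smul]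
      norm_num
    rw [this]
    refine Matrix.PosSemidef.of_dotProduct_mulVec_nonneg ?_ (fun x => ?_)
    · show ((2:ℝ)⁻¹ • ((2:ℝ) • B - H))ᴴ = _
      rw [Matrix.conjTranspose_smul, h2Bpsd.1.eq, star_trivial]
    have := h2Bpsd.dotProduct_mulVec_nonneg x
    rw [smul_mulVec, dotProduct_smul, smul_eq_mul]
    positivity
  have hdetH : IsUnit H.det := hH.det_pos.ne'.isUnit
  have hGinv : ((2:ℝ)⁻¹ • H)⁻¹ = (2:ℝ) • H⁻¹ := by
    apply Matrix.inv_eq_right_inv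
    rw [smul_mul_assoc, mul_smul_comm, smul_smul, Matrix.mul_nonsing_inv _ hdetH]
    norm_num
  -- quadratic form comparisons
  have hq_lb : ∀ x : Fin d → ℝ, x ⬝ᵥ (H⁻¹ *ᵥ x) ≤ x ⬝ᵥ (B⁻¹ *ᵥ x) :=
    fun x => quad_inv_anti hBpos hH hHBpsd x
  have hq_ub : ∀ x : Fin d → ℝ, x ⬝ᵥ (B⁻¹ *ᵥ x) ≤ 2 * (x ⬝ᵥ (H⁻¹ *ᵥ x)) := by
    intro x
    have := quad_inv_anti hGpos hBpos hBGpsd x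
    rwa [hGinv, smul_mulVec, dotProduct_smul, smul_eq_mul] at this
  have hq0 : ∀ x : Fin d → ℝ, 0 ≤ x ⬝ᵥ (B⁻¹ *ᵥ x) := by
    intro x
    simpa using hBpos.inv.posSemidef.dotProduct_mulVec_nonneg x
  have hl0 : ∀ j, 0 ≤ ℓ j := by
    intro j
    rw [hℓ j]
    simpa using hH.inv.posSemidef.dotProduct_mulVec_nonneg (A j)
  have hdeff0 : 0 ≤ deff := hdeff ▸ Finset.sum_nonneg fun j _ => hl0 j
  intro i
  set q : ℝ := A i ⬝ᵥ (B⁻¹ *ᵥ A i) with hq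
  have hfix' : D i = m / (m + q / π i) := hfix i
  have hq0' : 0 ≤ q := hq0 (A i)
  have hql : ℓ i ≤ q := by rw [hℓ i]; exact hq_lb (A i)
  have hqu : q ≤ 2 * ℓ i := by rw [hℓ i]; exact hq_ub (A i)
  have hπi := hπ i
  rcases eq_or_lt_of_le hdeff0 with hdz | hdpos
  · -- deff = 0
    have hsum0 : ∑ j, ℓ j = 0 := by rw [← hdeff, ← hdz]
    have hli : ℓ i = 0 :=
      (Finset.sum_eq_zero_iff_of_nonneg (fun j _ => hl0 j)).mp hsum0 i (Finset.mem_univ i)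
    have hqz : q = 0 := le_antisymm (by linarith) hq0'
    have hDi : D i = 1 := by
      rw [hfix', hqz, zero_div, add_zero, div_self hm.ne']
    rw [hDi, ← hdz]
    norm_num [div_self hm.ne']
  · -- deff > 0
    have hρmax0 : 0 ≤ ρmax :=
      le_trans (div_nonneg (hl0 i) (by positivity)) (hρmax i)
    have hmax : ℓ i / π i ≤ ρmax * deff := by
      have h := hρmax i
      rw [div_le_iff₀ (by positivity)] at h
      rw [div_le_iff₀ hπi]
      nlinarith
    have hmin : ρmin * deff ≤ ℓ i / π i := by
      have h := hρmin i
      rw [le_div_iff₀ (by positivity)] at h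
      rw [le_div_iff₀ hπi]
      nlinarith
    have hqd0 : 0 ≤ q / π i := div_nonneg hq0' hπi.le
    have hub : q / π i ≤ 2 * ρmax * deff := by
      have : q / π i ≤ 2 * (ℓ i / π i) := by
        rw [div_le_iff₀ hπi]
        have := hqu
        have h2 : 2 * (ℓ i / π i) * π i = 2 * ℓ i := by field_simp
        linarith [h2 ▸ le_refl (2 * (ℓ i / π i) * π i)]
      linarith
    have hlb : ρmin * deff ≤ q / π i := by
      have : ℓ i / π i ≤ q / π i := by gcongr
      linarith
    constructor
    · rw [hfix']
      apply div_le_div_of_nonneg_left hm.le (by positivity)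
      linarith
    · rw [hfix']
      apply div_le_div_of_nonneg_left hm.le (by positivity)
      linarith
end
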